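/- For every real number z > 1/4 and every real number t, the series ∑_{n=0}^∞ g_n(z)·t^n/n! converges and its sum equals e^{t/(2√z)} · ( cos( t·√(4z−1)/(2√z) ) + (1/√(4z−1))·sin( t·√(4z−1)/(2√z) ) ). -/

import Mathlib

/-- The G-polynomials: `G 0 z = 1`, `G 1 z = 1`, `G (n+2) z = G (n+1) z - z * G n z`. -/
noncomputable def G : ℕ → ℝ → ℝ
  | 0, _ => 1
  | 1, _ => 1
  | (n + 2), z => G (n + 1) z - z * G n z

/-- The irrational functions `g n z = G n z / (√z)^n`. -/
noncomputable def g (n : ℕ) (z : ℝ) : ℝ := G n z / (Real.sqrt z) ^ n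

theorem stmt_10 (z t : ℝ) (hz : 1 / 4 < z) :
    HasSum (fun n : ℕ => g n z * t ^ n / (Nat.factorial n))
      (Real.exp (t / (2 * Real.sqrt z)) *
        (Real.cos (t * Real.sqrt (4 * z - 1) / (2 * Real.sqrt z)) +
          (1 / Real.sqrt (4 * z - 1)) *
            Real.sin (t * Real.sqrt (4 * z - 1) / (2 * Real.sqrt z)))) := by
  set sz := Real.sqrt z with hszdef
  set w := Real.sqrt (4 * z - 1) with hwdef
  have hzpos : (0:ℝ) < z := lt_trans (by norm_num) hz
  have hsz : 0 < sz := Real.sqrt_pos.mpr hzpos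
  have hw : 0 < w := Real.sqrt_pos.mpr (by linarith)
  have hsz2 : sz ^ 2 = z := Real.sq_sqrt hzpos.le
  have hw2 : w ^ 2 = 4 * z - 1 := Real.sq_sqrt (by linarith)
  have hszC : (sz : ℂ) ≠ 0 := by exact_mod_cast hsz.ne'
  have hwC : (w : ℂ) ≠ 0 := by exact_mod_cast hw.ne'
  have hsz2C : (sz : ℂ) ^ 2 = (z : ℂ) := by exact_mod_cast hsz2
  have hw2C : (w : ℂ) ^ 2 = 4 * (z : ℂ) - 1 := by exact_mod_cast hw2
  set c : ℂ := (1 + w * Complex.I) / (2 * sz) with hc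
  set d : ℂ := (1 - w * Complex.I) / (2 * sz) with hd
  set a : ℂ := 1/2 - Complex.I / (2 * w) with ha
  set b : ℂ := 1/2 + Complex.I / (2 * w) with hb
  clear_value c d a b
  have hcq : c ^ 2 = c / sz - 1 := by
    rw [hc]; field_simp
    linear_combination (w:ℂ)^2 * Complex.I_sq + 4 * hsz2C - hw2C
  have hdq : d ^ 2 = d / sz - 1 := by
    rw [hd]; field_simp
    linear_combination (w:ℂ)^2 * Complex.I_sq + 4 * hsz2C - hw2C
  have hg2 : ∀ n, g (n+2) z = g (n+1) z / sz - g n z := by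
    intro n
    simp only [g]
    rw [← hszdef]
    rw [show G (n+2) z = G (n+1) z - z * G n z from rfl, ← hsz2]
    field_simp
    ring
  have key : ∀ n, ((g n z : ℂ)) = a * c ^ n + b * d ^ n := by
    intro n
    induction n using Nat.twoStepInduction with
    | zero => simp [g, G, ha, hb]; ring
    | one =>
      have : g 1 z = 1 / sz := by simp [g, G]; exact hszdef.symm
      rw [this]
      push_cast
      rw [ha, hb, hc, hd]
      field_simp
      linear_combination (2*(w:ℂ)) * Complex.I_sq
    | more n ih1 ih2 =>
      rw [hg2 n]
      push_cast
      rw [ih1, ih2]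
      have e1 : c ^ (n+2) = c ^ (n+1) / sz - c ^ n := by
        have h : c ^ (n+2) = c ^ n * c ^ 2 := by ring
        rw [h, hcq]; ring
      have e2 : d ^ (n+2) = d ^ (n+1) / sz - d ^ n := by
        have h : d ^ (n+2) = d ^ n * d ^ 2 := by ring
        rw [h, hdq]; ring
      rw [e1, e2]; ring
  have hexp : ∀ u : ℂ, HasSum (fun n : ℕ => u ^ n / n.factorial) (Complex.exp u) := by
    intro u
    rw [Complex.exp_eq_exp_ℂ]
    exact NormedSpace.expSeries_div_hasSum_exp u
  have h1 := (hexp ((t : ℂ) * c)).mul_left a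
  have h2 := (hexp ((t : ℂ) * d)).mul_left b
  have hsum : HasSum (fun n : ℕ => ((g n z * t ^ n / (Nat.factorial n) : ℝ) : ℂ))
      (a * Complex.exp ((t:ℂ) * c) + b * Complex.exp ((t:ℂ) * d)) := by
    have h3 := h1.add h2
    convert h3 using 2 with n
    · rfl
    push_cast
    rw [key n]
    ring
  have hS : a * Complex.exp ((t:ℂ) * c) + b * Complex.exp ((t:ℂ) * d) =
      ((Real.exp (t / (2 * sz)) *
        (Real.cos (t * w / (2 * sz)) + (1 / w) * Real.sin (t * w / (2 * sz))) : ℝ) : ℂ) := by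
    have htc : (t:ℂ) * c = (↑(t / (2 * sz)) : ℂ) + (↑(t * w / (2 * sz)) : ℂ) * Complex.I := by
      rw [hc]; push_cast; field_simp
    have htd : (t:ℂ) * d = (↑(t / (2 * sz)) : ℂ) + (↑(-(t * w / (2 * sz))) : ℂ) * Complex.I := by
      rw [hd]; push_cast; field_simp; ring
    rw [htc, htd, Complex.exp_add, Complex.exp_add, Complex.exp_mul_I, Complex.exp_mul_I,
      ← Complex.ofReal_exp, ← Complex.ofReal_cos, ← Complex.ofReal_sin,
      ← Complex.ofReal_cos, ← Complex.ofReal_sin]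
    push_cast [Real.cos_neg, Real.sin_neg]
    rw [ha, hb]
    field_simp
    linear_combination (-2*Complex.sin ((w:ℂ)*(t:ℂ)/(2*(sz:ℂ)))) * Complex.I_sq
  rw [hS] at hsum
  exact Complex.hasSum_ofReal.mp hsum
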